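/- Let G be a finite non-nilpotent group and C a connected component of the nilpotent graph of G. Then for every g ∈ C, the conjugate g⁻¹Cg = C; in particular C ⊆ N_G(C). -/

import Mathlib

def nilpotentizer (G : Type*) [Group G] : Set G :=
  {g | ∀ h : G, Group.IsNilpotent (Subgroup.closure ({g, h} : Set G))}

def nilpotentizerOf {G : Type*} [Group G] (x : G) : Set G :=
  {g | Group.IsNilpotent (Subgroup.closure ({g, x} : Set G))}

def nilpotentGraph (G : Type*) [Group G] :
    SimpleGraph {x : G // x ∉ nilpotentizer G} where
  Adj a b := a ≠ b ∧ Group.IsNilpotent (Subgroup.closure ({(a : G), (b : G)} : Set G))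
  symm := ⟨fun a b ⟨hne, h⟩ => ⟨fun e => hne e.symm, by rwa [Set.pair_comm]⟩⟩
  loopless := ⟨fun a ⟨h, _⟩ => h rfl⟩

noncomputable def hypercenter (G : Type*) [Group G] : Subgroup G := upperCentralSeries G (Nat.card G)

instance {G : Type*} [Group G] : (hypercenter G).Normal := by
  show (Subgroup.upperCentralSeries G (Nat.card G)).Normal; infer_instance

section Aux
variable {G : Type*} [Group G]

lemma conj_pair_nilpotent (g x y : G)
    (h : Group.IsNilpotent (Subgroup.closure ({x, y} : Set G))) :
    Group.IsNilpotent (Subgroup.closure ({g * x * g⁻¹, g * y * g⁻¹} : Set G)) := by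
  have himg : ({g * x * g⁻¹, g * y * g⁻¹} : Set G)
      = (MulAut.conj g).toMonoidHom '' ({x, y} : Set G) := by
    simp [Set.image_insert_eq, Set.image_singleton, MulAut.conj_apply]
  rw [himg, ← MonoidHom.map_closure]
  set H := Subgroup.closure ({x, y} : Set G)
  have e := Subgroup.equivMapOfInjective H (MulAut.conj g).toMonoidHom
    (MulAut.conj g).injective
  exact nilpotent_of_surjective e.toMonoidHom e.surjective

lemma conj_mem_nilpotentizer (g x : G) (h : x ∈ nilpotentizer G) :
    g * x * g⁻¹ ∈ nilpotentizer G := by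
  intro k
  have h2 : g * (g⁻¹ * k * g) * g⁻¹ = k := by group
  have := conj_pair_nilpotent g x (g⁻¹ * k * g) (h _)
  rwa [h2] at this

def conjVert (g : G) (v : {x : G // x ∉ nilpotentizer G}) : {x : G // x ∉ nilpotentizer G} :=
  ⟨g * v.val * g⁻¹, fun hmem => v.prop (by
    have := conj_mem_nilpotentizer g⁻¹ _ hmem
    simpa [mul_assoc] using this)⟩

def conjHom (g : G) : nilpotentGraph G →g nilpotentGraph G where
  toFun := conjVert g
  map_rel' := by
    rintro a b ⟨hne, hnil⟩
    refine ⟨fun hEq => hne ?_, conj_pair_nilpotent g _ _ hnil⟩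
    have : g * a.val * g⁻¹ = g * b.val * g⁻¹ := congrArg Subtype.val hEq
    ext
    exact mul_left_cancel (mul_right_cancel this)

lemma conj_reachable (g : G) {a b : {x : G // x ∉ nilpotentizer G}}
    (h : (nilpotentGraph G).Reachable a b) :
    (nilpotentGraph G).Reachable (conjVert g a) (conjVert g b) :=
  h.map (conjHom g)

end Aux

theorem nilpotentGraph_component_conj_invariant {G : Type*} [Group G] [Finite G]
    (hG : ¬ Group.IsNilpotent G)
    (C : (nilpotentGraph G).ConnectedComponent)
    (g : G) (hg : g ∈ Subtype.val '' C.supp) :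
    (fun x => g⁻¹ * x * g) '' (Subtype.val '' C.supp) = Subtype.val '' C.supp := by
  obtain ⟨v, hvC, hvval⟩ := hg
  have hvC' : (nilpotentGraph G).connectedComponentMk v = C := hvC
  have key : ∀ w : {x : G // x ∉ nilpotentizer G}, w ∈ C.supp →
      conjVert g⁻¹ w ∈ C.supp := by
    intro w hw
    have hw' : (nilpotentGraph G).connectedComponentMk w = C := hw
    have hr : (nilpotentGraph G).Reachable v w := by
      exact SimpleGraph.ConnectedComponent.exact (hvC'.trans hw'.symm)
    have hr2 := conj_reachable g⁻¹ hr
    have hfix : conjVert g⁻¹ v = v := by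
      ext; simp [conjVert, hvval]
    rw [hfix] at hr2
    show (nilpotentGraph G).connectedComponentMk _ = C
    rw [← hvC']
    exact (SimpleGraph.ConnectedComponent.sound hr2).symm
  have key2 : ∀ w : {x : G // x ∉ nilpotentizer G}, w ∈ C.supp →
      conjVert g w ∈ C.supp := by
    intro w hw
    have hw' : (nilpotentGraph G).connectedComponentMk w = C := hw
    have hr : (nilpotentGraph G).Reachable v w :=
      SimpleGraph.ConnectedComponent.exact (hvC'.trans hw'.symm)
    have hr2 := conj_reachable g hr
    have hfix : conjVert g v = v := by
      ext; simp [conjVert, hvval]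
    rw [hfix] at hr2
    show (nilpotentGraph G).connectedComponentMk _ = C
    rw [← hvC']
    exact (SimpleGraph.ConnectedComponent.sound hr2).symm
  ext x
  constructor
  · rintro ⟨y, ⟨w, hw, rfl⟩, rfl⟩
    exact ⟨conjVert g⁻¹ w, key w hw, by simp [conjVert, mul_assoc]⟩
  · rintro ⟨w, hw, rfl⟩
    exact ⟨g * w.val * g⁻¹, ⟨conjVert g w, key2 w hw, rfl⟩, by group⟩
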